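/- Let M_μ be SPD, S̃ full row rank, Z = M_μ − M_μ S̃ᵀ(S̃ M_μ S̃ᵀ)^{-1} S̃ M_μ, and let P be a matrix with full column rank such that im P ∩ im S̃ᵀ = {0}. Then Pᵀ Z P is symmetric positive definite. -/

import Mathlib

open Matrix

theorem cotree_projected_schur_posDef
    {N n m : ℕ} (Mμ : Matrix (Fin n) (Fin n) ℝ)
    (St : Matrix (Fin N) (Fin n) ℝ) (P : Matrix (Fin n) (Fin m) ℝ)
    (hMμ : Mμ.PosDef)
    (hfull : ∀ y : Fin N → ℝ, Stᵀ *ᵥ y = 0 → y = 0)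
    (hP : ∀ x : Fin m → ℝ, P *ᵥ x = 0 → x = 0)
    (hdisjoint : ∀ v : Fin n → ℝ, (∃ x, v = P *ᵥ x) → (∃ y, v = Stᵀ *ᵥ y) → v = 0) :
    (Pᵀ * (Mμ - Mμ * Stᵀ * (St * Mμ * Stᵀ)⁻¹ * St * Mμ) * P).PosDef := by
  set A : Matrix (Fin N) (Fin N) ℝ := St * Mμ * Stᵀ with hAdef
  have hMsymm : Mμᵀ = Mμ := by
    have := hMμ.isHermitian.eq
    rwa [conjTranspose_eq_transpose_of_trivial] at this
  -- A is positive definite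
  have hA : A.PosDef := by
    refine PosDef.of_dotProduct_mulVec_pos ?_ ?_
    · rw [Matrix.IsHermitian, hAdef, conjTranspose_eq_transpose_of_trivial]
      simp only [transpose_mul, transpose_transpose, hMsymm, Matrix.mul_assoc]
    · intro y hy
      have hv : Stᵀ *ᵥ y ≠ 0 := fun h => hy (hfull y h)
      have := hMμ.dotProduct_mulVec_pos hv
      simpa [hAdef, star_trivial, ← mulVec_mulVec, dotProduct_mulVec, vecMul_transpose,
        mulVec_transpose, Matrix.mul_assoc] using this
  have hAinvsymm : (A⁻¹)ᵀ = A⁻¹ := by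
    have := hA.inv.isHermitian.eq
    rwa [conjTranspose_eq_transpose_of_trivial] at this
  have hAunit : IsUnit A.det := (isUnit_iff_isUnit_det A).mp hA.isUnit
  -- the "residual" matrix
  set B : Matrix (Fin n) (Fin n) ℝ := 1 - Stᵀ * A⁻¹ * St * Mμ with hBdef
  have hBT : Bᵀ = 1 - Mμ * Stᵀ * A⁻¹ * St := by
    rw [hBdef]
    simp only [transpose_sub, transpose_one, transpose_mul, transpose_transpose,
      hMsymm, hAinvsymm]
    rw [Matrix.mul_assoc, Matrix.mul_assoc]
  have hZeq : Mμ - Mμ * Stᵀ * A⁻¹ * St * Mμ = Bᵀ * Mμ * B := by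
    rw [hBT, hBdef]
    have key : Mμ * Stᵀ * A⁻¹ * St * Mμ * (Stᵀ * A⁻¹ * St * Mμ)
        = Mμ * Stᵀ * A⁻¹ * St * Mμ := by
      have : Mμ * Stᵀ * A⁻¹ * St * Mμ * (Stᵀ * A⁻¹ * St * Mμ)
          = Mμ * Stᵀ * (A⁻¹ * (St * Mμ * Stᵀ) * A⁻¹) * (St * Mμ) := by
        simp only [Matrix.mul_assoc]
      rw [this, ← hAdef, Matrix.mul_assoc A⁻¹, mul_nonsing_inv A hAunit, Matrix.mul_one]
      simp only [Matrix.mul_assoc]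
    simp only [Matrix.mul_sub, Matrix.sub_mul, Matrix.mul_one, Matrix.one_mul]
    simp only [Matrix.mul_assoc] at key ⊢
    rw [key]
    abel
  rw [show Mμ - Mμ * Stᵀ * A⁻¹ * St * Mμ = Bᵀ * Mμ * B from hZeq]
  have hform : Pᵀ * (Bᵀ * Mμ * B) * P = (B * P)ᵀ * Mμ * (B * P) := by
    rw [transpose_mul]
    simp only [Matrix.mul_assoc]
  rw [hform]
  refine PosDef.of_dotProduct_mulVec_pos ?_ ?_
  · rw [Matrix.IsHermitian, conjTranspose_eq_transpose_of_trivial]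
    simp only [transpose_mul, transpose_transpose, hMsymm, Matrix.mul_assoc]
  · intro x hx
    have hBPx : (B * P) *ᵥ x ≠ 0 := by
      intro h0
      rw [← mulVec_mulVec, hBdef, sub_mulVec, one_mulVec] at h0
      have h1 : P *ᵥ x = (Stᵀ * A⁻¹ * St * Mμ) *ᵥ (P *ᵥ x) := sub_eq_zero.mp h0
      have h2 : P *ᵥ x = Stᵀ *ᵥ ((A⁻¹ * St * Mμ) *ᵥ (P *ᵥ x)) := by
        rw [mulVec_mulVec, show Stᵀ * (A⁻¹ * St * Mμ) = Stᵀ * A⁻¹ * St * Mμ by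
          simp only [Matrix.mul_assoc]]
        exact h1
      have hPx0 : P *ᵥ x = 0 := hdisjoint (P *ᵥ x) ⟨x, rfl⟩ ⟨_, h2⟩
      exact hx (hP x hPx0)
    have := hMμ.dotProduct_mulVec_pos hBPx
    simpa [star_trivial, ← mulVec_mulVec, dotProduct_mulVec, vecMul_transpose,
      Matrix.mul_assoc] using this
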